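/- arXiv:1310.7984 — 2 statements merged into one kernel-verified Lean document; each statement's English description precedes it below -/
import Mathlib

section
/- Let G be a finite simple connected non-bipartite graph on n vertices and I(G*) the edge ideal of its whisker graph in S* = K[x_1,...,x_n,y_1,...,y_n]. Then depth(S*/I(G*)^k) = 0 for all k ≥ n; equivalently, the maximal graded ideal is an associated prime of S*/I(G*)^k. -/
open MvPolynomial

/-- The depth of the module `M` with respect to the ideal `m`: the supremum of the
lengths of `M`-regular sequences consisting of elements of `m`. -/
noncomputable def idealDepth {R : Type*} [CommRing R] (m : Ideal R)
    (M : Type*) [AddCommGroup M] [Module R M] : ℕ :=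
  sSup {d : ℕ | ∃ rs : List R, rs.length = d ∧ (∀ r ∈ rs, r ∈ m) ∧
    RingTheory.Sequence.IsRegular M rs}

/-- The graded maximal ideal of a polynomial ring, generated by all the variables. -/
noncomputable def maxIdeal (σ K : Type*) [Field K] : Ideal (MvPolynomial σ K) :=
  Ideal.span (Set.range X)

/-- The edge ideal of the whisker graph `G*` of a graph `G` on `{1,…,n}`, inside
`S* = K[x_1,…,x_n,y_1,…,y_n]`, where `x_i = X (Sum.inl i)` and `y_i = X (Sum.inr i)`.
It is generated by `x_i x_j` for edges `{i,j}` of `G` and by `x_i y_i` for all `i`. -/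
noncomputable def whiskerEdgeIdeal {n : ℕ} (K : Type*) [Field K] (G : SimpleGraph (Fin n)) :
    Ideal (MvPolynomial (Fin n ⊕ Fin n) K) :=
  Ideal.span ({p | ∃ i j, G.Adj i j ∧ p = X (Sum.inl i) * X (Sum.inl j)} ∪
    Set.range (fun i : Fin n => X (Sum.inl i) * X (Sum.inr i)))

set_option linter.unusedSectionVars false

section WalkLemmas

variable {V : Type*} [Fintype V] [DecidableEq V] {G : SimpleGraph V}

lemma HHQ.exists_edge_out {u v : V} (p : G.Walk u v) (S : Set V) (hu : u ∈ S) (hv : v ∉ S) :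
    ∃ y ∈ S, ∃ z, z ∉ S ∧ G.Adj y z := by
  induction p with
  | nil => exact absurd hu hv
  | @cons a b c h q ih =>
    by_cases hb : b ∈ S
    · exact ih hb hv
    · exact ⟨a, hu, b, hb, h⟩

lemma HHQ.exists_detour {r : V} (w : G.Walk r r) {y z : V} (hy : y ∈ w.support)
    (hadj : G.Adj y z) :
    ∃ w' : G.Walk r r, w'.length = w.length + 2 ∧ z ∈ w'.support ∧
      ∀ x ∈ w.support, x ∈ w'.support := by
  refine ⟨(w.takeUntil y hy).append (SimpleGraph.Walk.cons hadj
    (SimpleGraph.Walk.cons hadj.symm (w.dropUntil y hy))), ?_, ?_, ?_⟩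
  · have hspec := congrArg SimpleGraph.Walk.length (w.take_spec hy)
    rw [SimpleGraph.Walk.length_append] at hspec
    simp [SimpleGraph.Walk.length_append]
    omega
  · rw [SimpleGraph.Walk.mem_support_append_iff]
    right
    simp [SimpleGraph.Walk.support_cons]
  · intro x hx
    conv at hx => rw [← w.take_spec hy]
    rw [SimpleGraph.Walk.mem_support_append_iff] at hx ⊢
    rcases hx with hx | hx
    · exact Or.inl hx
    · right
      simp only [SimpleGraph.Walk.support_cons, List.mem_cons] at hx ⊢
      tauto

lemma HHQ.exists_spanning_closed_walk (hG : G.Connected) {r : V} :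
    ∀ (d : ℕ) (w : G.Walk r r), Fintype.card V - w.support.toFinset.card ≤ d →
    ∃ w' : G.Walk r r, (∀ x, x ∈ w'.support) ∧
      w'.length + 2 * w.support.toFinset.card ≤ w.length + 2 * Fintype.card V ∧
      w'.length % 2 = w.length % 2 := by
  intro d
  induction d with
  | zero =>
    intro w hd
    have hcard : w.support.toFinset = Finset.univ := by
      apply Finset.eq_univ_of_card
      have := Finset.card_le_univ w.support.toFinset
      omega
    refine ⟨w, fun x => ?_, by
      have := Finset.card_le_univ w.support.toFinset
      omega, rfl⟩
    have : x ∈ w.support.toFinset := hcard ▸ Finset.mem_univ x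
    simpa using this
  | succ d ih =>
    intro w hd
    by_cases hall : ∀ x, x ∈ w.support
    · exact ⟨w, hall, by have := Finset.card_le_univ w.support.toFinset; omega, rfl⟩
    · push_neg at hall
      obtain ⟨x, hx⟩ := hall
      obtain ⟨p⟩ := hG.preconnected r x
      obtain ⟨y, hy, z, hz, hyz⟩ := HHQ.exists_edge_out p {v | v ∈ w.support}
        (w.start_mem_support) hx
      obtain ⟨w₂, hlen, hzmem, hsub⟩ := HHQ.exists_detour w hy hyz
      have hsubF : w.support.toFinset ⊆ w₂.support.toFinset := by
        intro a ha
        simp only [List.mem_toFinset] at ha ⊢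
        exact hsub a ha
      have hcard2 : w.support.toFinset.card + 1 ≤ w₂.support.toFinset.card := by
        have : insert z w.support.toFinset ⊆ w₂.support.toFinset := by
          intro a ha
          rcases Finset.mem_insert.mp ha with h | h
          · subst h; simpa using hzmem
          · exact hsubF h
        have hc := Finset.card_le_card this
        rwa [Finset.card_insert_of_notMem (by simpa using hz)] at hc
      have hlt : w.support.toFinset.card < Fintype.card V := by
        apply Finset.card_lt_card
        refine ⟨Finset.subset_univ _, fun hsub2 => ?_⟩
        exact hx (by simpa using hsub2 (Finset.mem_univ x))
      have hc2le : w₂.support.toFinset.card ≤ Fintype.card V := Finset.card_le_univ _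
      obtain ⟨w', hw'all, hw'len, hw'par⟩ := ih w₂ (by omega)
      exact ⟨w', hw'all, by omega, by omega⟩

lemma HHQ.exists_padded {r : V} (w : G.Walk r r) (hpos : 0 < w.length) (m : ℕ) :
    ∃ w' : G.Walk r r, w'.length = w.length + 2 * m ∧ ∀ x ∈ w.support, x ∈ w'.support := by
  induction m with
  | zero => exact ⟨w, by omega, fun x hx => hx⟩
  | succ m ih =>
    obtain ⟨w', hlen, hsub⟩ := ih
    have hadj : G.Adj r (w.getVert 1) := by
      have := w.adj_getVert_succ hpos
      rwa [w.getVert_zero] at this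
    refine ⟨w'.append (SimpleGraph.Walk.cons hadj (SimpleGraph.Walk.cons hadj.symm
      SimpleGraph.Walk.nil)), by simp [SimpleGraph.Walk.length_append, hlen]; omega, ?_⟩
    intro x hx
    rw [SimpleGraph.Walk.mem_support_append_iff]
    exact Or.inl (hsub x hx)

lemma HHQ.exists_odd_closed_walk (hG : G.Connected) (hbip : ¬ G.Colorable 2) :
    ∃ (r : V) (w : G.Walk r r), w.length % 2 = 1 ∧
      w.length + 1 ≤ 2 * w.support.toFinset.card := by
  classical
  have hne : Nonempty V := hG.nonempty
  obtain ⟨r⟩ := hne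
  by_cases hcol : ∀ u v, G.Adj u v → G.dist r u % 2 ≠ G.dist r v % 2
  · exfalso
    apply hbip
    exact ⟨SimpleGraph.Coloring.mk (fun v => ⟨G.dist r v % 2, Nat.mod_lt _ (by norm_num)⟩)
      (fun {u v} hadj h => hcol u v hadj (by simpa using congrArg Fin.val h))⟩
  · push_neg at hcol
    obtain ⟨u, v, hadj, hpar⟩ := hcol
    obtain ⟨p1, hp1, hl1⟩ := (hG.preconnected r u).exists_path_of_dist
    obtain ⟨p2, hp2, hl2⟩ := (hG.preconnected r v).exists_path_of_dist
    refine ⟨r, p1.append (SimpleGraph.Walk.cons hadj p2.reverse), ?_, ?_⟩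
    · simp [SimpleGraph.Walk.length_append, hl1, hl2]
      omega
    · have hcard1 : G.dist r u + 1 ≤ (p1.append (SimpleGraph.Walk.cons hadj
        p2.reverse)).support.toFinset.card := by
        have hsub : p1.support.toFinset ⊆ (p1.append (SimpleGraph.Walk.cons hadj
            p2.reverse)).support.toFinset := by
          intro a ha
          simp only [List.mem_toFinset] at ha ⊢
          rw [SimpleGraph.Walk.mem_support_append_iff]
          exact Or.inl ha
        have := Finset.card_le_card hsub
        rwa [List.toFinset_card_of_nodup hp1.support_nodup,
          SimpleGraph.Walk.length_support, hl1] at this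
      have hcard2 : G.dist r v + 1 ≤ (p1.append (SimpleGraph.Walk.cons hadj
        p2.reverse)).support.toFinset.card := by
        have hsub : p2.support.toFinset ⊆ (p1.append (SimpleGraph.Walk.cons hadj
            p2.reverse)).support.toFinset := by
          intro a ha
          simp only [List.mem_toFinset] at ha ⊢
          rw [SimpleGraph.Walk.mem_support_append_iff]
          right
          rw [SimpleGraph.Walk.support_cons]
          simp [SimpleGraph.Walk.support_reverse]
          right
          simpa using ha
        have := Finset.card_le_card hsub
        rwa [List.toFinset_card_of_nodup hp2.support_nodup,
          SimpleGraph.Walk.length_support, hl2] at this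
      simp only [SimpleGraph.Walk.length_append, SimpleGraph.Walk.length_cons,
        SimpleGraph.Walk.length_reverse, hl1, hl2]
      omega

lemma HHQ.exists_final_walk (hG : G.Connected) (hbip : ¬ G.Colorable 2) {k : ℕ}
    (hk : Fintype.card V ≤ k) :
    ∃ (r : V) (w : G.Walk r r), w.length = 2 * k - 1 ∧ ∀ x, x ∈ w.support := by
  classical
  obtain ⟨r, w0, hodd, hbound⟩ := HHQ.exists_odd_closed_walk hG hbip
  obtain ⟨w1, h1all, h1len, h1par⟩ := HHQ.exists_spanning_closed_walk hG
    (Fintype.card V - w0.support.toFinset.card) w0 le_rfl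
  have hcle : w0.support.toFinset.card ≤ Fintype.card V := Finset.card_le_univ _
  have h1odd : w1.length % 2 = 1 := by omega
  have h1le : w1.length ≤ 2 * k - 1 := by omega
  obtain ⟨w2, h2len, h2sub⟩ := HHQ.exists_padded w1 (by omega) ((2 * k - 1 - w1.length) / 2)
  refine ⟨r, w2, by omega, fun x => h2sub x (h1all x)⟩

lemma HHQ.exists_cyclic_fun {k : ℕ} {r : V} (w : G.Walk r r) (hlen : w.length = 2 * k - 1)
    (hall : ∀ x, x ∈ w.support) (hk1 : 1 ≤ k) :
    ∃ c : ℕ → V, (∀ j, G.Adj (c j) (c (j+1))) ∧ (∀ j, c (j + (2*k-1)) = c j) ∧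
      Function.Surjective c := by
  set L := 2*k-1 with hLdef
  have hL0 : 0 < L := by omega
  have hL1 : 1 < L := by
    rcases Nat.lt_or_ge 1 L with h | h
    · exact h
    · exfalso
      have hw1 : w.length = 1 := by omega
      have hadj := w.adj_getVert_succ (by omega : 0 < w.length)
      rw [w.getVert_zero] at hadj
      norm_num at hadj
      have : w.getVert 1 = r := by
        rw [show (1:ℕ) = w.length from hw1.symm]; exact w.getVert_length
      rw [this] at hadj
      exact G.irrefl hadj
  refine ⟨fun j => w.getVert (j % L), ?_, ?_, ?_⟩
  · intro j
    show G.Adj (w.getVert (j % L)) (w.getVert ((j+1) % L))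
    have hiL : j % L < L := Nat.mod_lt _ hL0
    have hmod : (j + 1) % L = (j % L + 1) % L := by
      rw [Nat.add_mod, Nat.mod_eq_of_lt hL1]
    by_cases h : j % L + 1 < L
    · have h1 : (j+1) % L = j % L + 1 := by rw [hmod, Nat.mod_eq_of_lt h]
      rw [h1]
      exact w.adj_getVert_succ (by omega)
    · have hj : j % L + 1 = L := by omega
      have h1 : (j+1) % L = 0 := by rw [hmod, hj, Nat.mod_self]
      rw [h1, w.getVert_zero]
      have h2 : w.getVert L = r := by rw [← hlen]; exact w.getVert_length
      have := w.adj_getVert_succ (by omega : j % L < w.length)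
      rwa [hj, h2] at this
  · intro j
    simp [Nat.add_mod_right]
  · intro x
    obtain ⟨i, hgv, hle⟩ := SimpleGraph.Walk.mem_support_iff_exists_getVert.mp (hall x)
    rcases Nat.lt_or_ge i (w.length) with h | h
    · exact ⟨i, by show w.getVert (i % L) = x; rw [Nat.mod_eq_of_lt (by omega)]; exact hgv⟩
    · have hiw : i = w.length := by omega
      refine ⟨0, ?_⟩
      show w.getVert (0 % L) = x
      rw [Nat.zero_mod, w.getVert_zero, ← hgv, hiw, w.getVert_length]

end WalkLemmas

section AlgebraLemmas

variable {n : ℕ} {K : Type*} [Field K] {G : SimpleGraph (Fin n)}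

lemma HHQ.edge_mem_whisker {i j : Fin n} (h : G.Adj i j) :
    (X (Sum.inl i) * X (Sum.inl j) : MvPolynomial (Fin n ⊕ Fin n) K) ∈ whiskerEdgeIdeal K G :=
  Ideal.subset_span (Or.inl ⟨i, j, h, rfl⟩)

lemma HHQ.whisk_mem_whisker (i : Fin n) :
    (X (Sum.inl i) * X (Sum.inr i) : MvPolynomial (Fin n ⊕ Fin n) K) ∈ whiskerEdgeIdeal K G :=
  Ideal.subset_span (Or.inr ⟨i, rfl⟩)

lemma HHQ.prod_walk_mem (c : ℕ → Fin n) (hadj : ∀ j, G.Adj (c j) (c (j+1))) (m a : ℕ) :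
    ∏ j ∈ Finset.range (2*m), (X (Sum.inl (c (a+j))) : MvPolynomial (Fin n ⊕ Fin n) K)
      ∈ (whiskerEdgeIdeal K G)^m := by
  induction m with
  | zero => simp [pow_zero, Ideal.one_eq_top]
  | succ m ih =>
    have h2 : 2*(m+1) = 2*m+1+1 := by ring
    rw [h2, Finset.prod_range_succ, Finset.prod_range_succ, mul_assoc, pow_succ]
    refine Ideal.mul_mem_mul ih ?_
    have heq : a + (2*m+1) = (a + 2*m) + 1 := by ring
    rw [heq]
    exact HHQ.edge_mem_whisker (hadj (a + 2*m))

lemma HHQ.not_mem_whisker_pow (c : ℕ → Fin n) (k : ℕ) (hk : 1 ≤ k) :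
    (∏ j ∈ Finset.range (2*k-1), (X (Sum.inl (c j)) : MvPolynomial (Fin n ⊕ Fin n) K))
      ∉ (whiskerEdgeIdeal K G)^k := by
  intro hmem
  set ψ : MvPolynomial (Fin n ⊕ Fin n) K →ₐ[K] Polynomial K :=
    aeval (fun _ => Polynomial.X) with hψ
  have hmap : (whiskerEdgeIdeal K G).map ψ.toRingHom ≤ Ideal.span {Polynomial.X ^ 2} := by
    rw [whiskerEdgeIdeal, Ideal.map_span]
    refine Ideal.span_le.mpr ?_
    rintro q ⟨p, hp, rfl⟩
    rcases hp with ⟨i, j, -, rfl⟩ | ⟨i, rfl⟩ <;>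
    · show (ψ _ : Polynomial K) ∈ _
      rw [map_mul, hψ]
      simp only [aeval_X]
      rw [← sq]
      exact Ideal.subset_span rfl
  have h1 : ψ (∏ j ∈ Finset.range (2*k-1), (X (Sum.inl (c j)) : MvPolynomial (Fin n ⊕ Fin n) K))
      ∈ ((whiskerEdgeIdeal K G)^k).map ψ.toRingHom := Ideal.mem_map_of_mem _ hmem
  rw [Ideal.map_pow] at h1
  have h2 := (Ideal.pow_right_mono hmap k) h1
  rw [Ideal.span_singleton_pow, Ideal.mem_span_singleton] at h2
  have hψu : ψ (∏ j ∈ Finset.range (2*k-1), (X (Sum.inl (c j)) : MvPolynomial (Fin n ⊕ Fin n) K))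
      = Polynomial.X ^ (2*k-1) := by
    rw [map_prod]
    simp only [hψ, aeval_X]
    rw [Finset.prod_const, Finset.card_range]
  rw [hψu, ← pow_mul] at h2
  have hne : (Polynomial.X ^ (2*k-1) : Polynomial K) ≠ 0 := pow_ne_zero _ Polynomial.X_ne_zero
  have := Polynomial.natDegree_le_of_dvd h2 hne
  rw [Polynomial.natDegree_pow, Polynomial.natDegree_pow, Polynomial.natDegree_X] at this
  omega

lemma HHQ.maxIdeal_isMaximal (σ K : Type*) [Field K] : (maxIdeal σ K).IsMaximal := by
  have hker : maxIdeal σ K = RingHom.ker (constantCoeff : MvPolynomial σ K →+* K) := by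
    apply le_antisymm
    · rw [maxIdeal]
      refine Ideal.span_le.mpr ?_
      rintro _ ⟨s, rfl⟩
      simp [RingHom.mem_ker]
    · intro p hp
      rw [RingHom.mem_ker] at hp
      have key : ∀ q : MvPolynomial σ K, q - C (constantCoeff q) ∈ maxIdeal σ K := by
        intro q
        induction q using MvPolynomial.induction_on with
        | C a => simp
        | add p q hp hq =>
          have heq : (p + q) - C (constantCoeff (p + q))
              = (p - C (constantCoeff p)) + (q - C (constantCoeff q)) := by
            rw [map_add, map_add]; ring
          rw [heq]
          exact Ideal.add_mem _ hp hq
        | mul_X p i hp =>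
          have h1 : constantCoeff (p * X i) = 0 := by simp
          rw [h1, map_zero, sub_zero]
          exact Ideal.mul_mem_left _ p (Ideal.subset_span ⟨i, rfl⟩)
      have hkey := key p
      rwa [hp, map_zero, sub_zero] at hkey
  rw [hker]
  exact RingHom.ker_isMaximal_of_surjective _ (fun a => ⟨C a, constantCoeff_C _ a⟩)

end AlgebraLemmas

/-- Herzog–Hibi–Qureshi, Corollary (non-bipartite case): if `G` is a finite simple connected
non-bipartite graph on `n` vertices, then `depth(S*/I(G*)^k) = 0` for all `k ≥ n`;
equivalently, the graded maximal ideal is an associated prime of `S*/I(G*)^k`. -/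
theorem depth_whisker_power_eq_zero_of_not_bipartite {n : ℕ} (K : Type*) [Field K]
    (G : SimpleGraph (Fin n)) (hG : G.Connected) (hbip : ¬ G.Colorable 2)
    (k : ℕ) (hk : n ≤ k) :
    idealDepth (maxIdeal (Fin n ⊕ Fin n) K)
      (MvPolynomial (Fin n ⊕ Fin n) K ⧸ (whiskerEdgeIdeal K G) ^ k) = 0 ∧
    maxIdeal (Fin n ⊕ Fin n) K ∈
      associatedPrimes (MvPolynomial (Fin n ⊕ Fin n) K)
        (MvPolynomial (Fin n ⊕ Fin n) K ⧸ (whiskerEdgeIdeal K G) ^ k) := by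
  classical
  have hn : 1 ≤ n := by
    have := hG.nonempty
    exact Fin.pos_iff_nonempty.mpr this
  have hk1 : 1 ≤ k := le_trans hn hk
  obtain ⟨r, w, hwlen, hwall⟩ := HHQ.exists_final_walk hG hbip
    (k := k) (by simpa using hk)
  obtain ⟨c, hadjc, hper, hsurj⟩ := HHQ.exists_cyclic_fun w hwlen hwall hk1
  set L := 2*k-1 with hLdef
  set I := whiskerEdgeIdeal K G with hIdef
  set u : MvPolynomial (Fin n ⊕ Fin n) K := ∏ j ∈ Finset.range L, X (Sum.inl (c j)) with hudef
  -- the shift invariance of u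
  have hshift : ∀ a, ∏ j ∈ Finset.range L, (X (Sum.inl (c (a+j)))
      : MvPolynomial (Fin n ⊕ Fin n) K) = u := by
    intro a
    induction a with
    | zero => simp [hudef]
    | succ a ih =>
      rw [← ih]
      have e1 : ∏ j ∈ Finset.range L, (X (Sum.inl (c (a+1+j)))
          : MvPolynomial (Fin n ⊕ Fin n) K)
          = (∏ j ∈ Finset.range (L-1), X (Sum.inl (c (a+1+j)))) *
            X (Sum.inl (c (a+1+(L-1)))) := by
        conv_lhs => rw [show L = (L-1)+1 by omega]
        rw [Finset.prod_range_succ]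
      have e2 : ∏ j ∈ Finset.range L, (X (Sum.inl (c (a+j)))
          : MvPolynomial (Fin n ⊕ Fin n) K)
          = (∏ j ∈ Finset.range (L-1), X (Sum.inl (c (a+(j+1))))) *
            X (Sum.inl (c (a+0))) := by
        conv_lhs => rw [show L = (L-1)+1 by omega]
        rw [Finset.prod_range_succ']
      rw [e1, e2]
      congr 1
      · apply Finset.prod_congr rfl
        intro j _
        rw [show a+1+j = a+(j+1) by omega]
      · rw [show a+1+(L-1) = a + L by omega, show a + L = a + (2*k-1) from rfl, hper a,
          Nat.add_zero]
  -- multiplication by any x-variable lands in I^k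
  have hx : ∀ a : ℕ, (X (Sum.inl (c a)) : MvPolynomial (Fin n ⊕ Fin n) K) * u ∈ I^k := by
    intro a
    have h2k : 2*k = L + 1 := by omega
    have heq : (X (Sum.inl (c a)) : MvPolynomial (Fin n ⊕ Fin n) K) * u
        = ∏ j ∈ Finset.range (2*k), X (Sum.inl (c (a+j))) := by
      rw [h2k, Finset.prod_range_succ, hshift a,
        show a + L = a + (2*k-1) from rfl, hper a, mul_comm]
    rw [heq]
    exact HHQ.prod_walk_mem c hadjc k a
  -- multiplication by any y-variable lands in I^k
  have hy : ∀ a : ℕ, (X (Sum.inr (c a)) : MvPolynomial (Fin n ⊕ Fin n) K) * u ∈ I^k := by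
    intro a
    have e2 : u = (∏ j ∈ Finset.range (2*(k-1)), (X (Sum.inl (c (a+1+j)))
        : MvPolynomial (Fin n ⊕ Fin n) K)) * X (Sum.inl (c a)) := by
      rw [← hshift a]
      conv_lhs => rw [show L = (2*(k-1))+1 by omega]
      rw [Finset.prod_range_succ']
      congr 1
      · apply Finset.prod_congr rfl
        intro j _
        rw [show a+(j+1) = a+1+j by omega]
    rw [e2]
    have e3 : (X (Sum.inr (c a)) : MvPolynomial (Fin n ⊕ Fin n) K) *
        ((∏ j ∈ Finset.range (2*(k-1)), (X (Sum.inl (c (a+1+j)))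
          : MvPolynomial (Fin n ⊕ Fin n) K)) * X (Sum.inl (c a)))
        = (X (Sum.inl (c a)) * X (Sum.inr (c a))) *
          ∏ j ∈ Finset.range (2*(k-1)), X (Sum.inl (c (a+1+j))) := by ring
    rw [e3]
    have hksucc : I^k = I * I^(k-1) := by
      conv_lhs => rw [show k = (k-1)+1 by omega]
      rw [pow_succ']
    rw [hksucc]
    exact Ideal.mul_mem_mul (HHQ.whisk_mem_whisker (c a))
      (HHQ.prod_walk_mem c hadjc (k-1) (a+1))
  have hXu : ∀ s : Fin n ⊕ Fin n, (X s : MvPolynomial (Fin n ⊕ Fin n) K) * u ∈ I^k := by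
    rintro (i | i)
    · obtain ⟨a, rfl⟩ := hsurj i
      exact hx a
    · obtain ⟨a, rfl⟩ := hsurj i
      exact hy a
  have hu_not : u ∉ I^k := HHQ.not_mem_whisker_pow c k hk1
  -- pass to the quotient
  set e : MvPolynomial (Fin n ⊕ Fin n) K ⧸ I^k := Ideal.Quotient.mk (I^k) u with hedef
  have he : e ≠ 0 := by
    rw [hedef, Ne, Ideal.Quotient.eq_zero_iff_mem]
    exact hu_not
  have hmle : maxIdeal (Fin n ⊕ Fin n) K ≤
      (Submodule.span (MvPolynomial (Fin n ⊕ Fin n) K) {e}).annihilator := by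
    rw [maxIdeal]
    refine Ideal.span_le.mpr ?_
    rintro _ ⟨s, rfl⟩
    rw [SetLike.mem_coe, Submodule.mem_annihilator_span_singleton]
    show Ideal.Quotient.mk (I^k) (X s * u) = 0
    rw [Ideal.Quotient.eq_zero_iff_mem]
    exact hXu s
  have hmmax : (maxIdeal (Fin n ⊕ Fin n) K).IsMaximal := HHQ.maxIdeal_isMaximal _ _
  have hann_ne : (Submodule.span (MvPolynomial (Fin n ⊕ Fin n) K) {e}).annihilator ≠ ⊤ := by
    intro h
    have h1 : (1 : MvPolynomial (Fin n ⊕ Fin n) K) ∈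
        (Submodule.span (MvPolynomial (Fin n ⊕ Fin n) K) {e}).annihilator := by
      rw [h]; exact Submodule.mem_top
    rw [Submodule.mem_annihilator_span_singleton, one_smul] at h1
    exact he h1
  have heq : maxIdeal (Fin n ⊕ Fin n) K
      = (Submodule.span (MvPolynomial (Fin n ⊕ Fin n) K) {e}).annihilator :=
    hmmax.eq_of_le hann_ne hmle
  constructor
  · -- depth is zero
    have hset : {d : ℕ | ∃ rs : List (MvPolynomial (Fin n ⊕ Fin n) K),
        rs.length = d ∧ (∀ r' ∈ rs, r' ∈ maxIdeal (Fin n ⊕ Fin n) K) ∧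
        RingTheory.Sequence.IsRegular
          (MvPolynomial (Fin n ⊕ Fin n) K ⧸ (whiskerEdgeIdeal K G) ^ k) rs} = {0} := by
      ext d
      simp only [Set.mem_setOf_eq, Set.mem_singleton_iff]
      constructor
      · rintro ⟨rs, hlen, hmem, hreg⟩
        by_contra hd
        match rs, hlen with
        | [], hlen => exact hd (by simpa using hlen.symm)
        | r' :: rs', hlen =>
          have hwr := hreg.toIsWeaklyRegular
          rw [RingTheory.Sequence.isWeaklyRegular_cons_iff] at hwr
          have hr : IsSMulRegular (MvPolynomial (Fin n ⊕ Fin n) K ⧸ (whiskerEdgeIdeal K G) ^ k)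
            r' := hwr.1
          have hre : r' • e = 0 := by
            have := hmle (hmem r' (List.mem_cons_self (a := r') (l := rs')))
            rwa [Submodule.mem_annihilator_span_singleton] at this
          apply he
          apply hr
          show r' • e = r' • 0
          rw [hre, smul_zero]
      · rintro rfl
        refine ⟨[], rfl, by simp, ?_, ?_⟩
        · exact RingTheory.Sequence.IsWeaklyRegular.nil _ _
        · have : Nontrivial (MvPolynomial (Fin n ⊕ Fin n) K ⧸ (whiskerEdgeIdeal K G) ^ k) :=
            ⟨e, 0, he⟩
          simp only [Ideal.ofList_nil, Submodule.bot_smul]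
          exact fun h => absurd h.symm bot_ne_top
    rw [idealDepth, hset, csSup_singleton]
  · -- the maximal ideal is an associated prime
    exact ⟨hmmax.isPrime, e, by
      have hc : (⊥ : Submodule (MvPolynomial (Fin n ⊕ Fin n) K)
          (MvPolynomial (Fin n ⊕ Fin n) K ⧸ I^k)).colon {e}
          = (Submodule.span (MvPolynomial (Fin n ⊕ Fin n) K) {e}).annihilator := by
        ext r
        rw [Submodule.mem_colon_singleton, Submodule.mem_annihilator_span_singleton,
          Submodule.mem_bot]
      rw [hc, ← heq, hmmax.isPrime.radical]⟩
end

section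
/- Let I ⊆ S = K[x_1,...,x_n] be a monomial ideal, x_1 a variable with deg_{x_1}(u) ≥ 2 for some minimal generator u, and let I' ⊆ S[y] be the 1-step polarization of I with respect to x_1 (replace one factor x_1 by y in each generator divisible by x_1^2). Then y − x_1 is a non zero-divisor on S[y]/I', and (S[y]/I')/(y − x_1)(S[y]/I') ≅ S/I. -/
open MvPolynomial

/-- The 1-step polarization, with respect to the variable `x_0`, of the monomial with
exponent vector `a`: if `x_0^2 ∣ x^a` one factor `x_0` is replaced by the new variable
`y = X none` (the other variables `x_i` become `X (some i)`); otherwise the monomial is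
unchanged. -/
noncomputable def oneStepPolarize {n : ℕ} (K : Type*) [Field K] (a : Fin (n + 1) →₀ ℕ) :
    MvPolynomial (Option (Fin (n + 1))) K :=
  if 2 ≤ a 0 then
    monomial (Finsupp.mapDomain Option.some (a - Finsupp.single 0 1) +
      Finsupp.single (none : Option (Fin (n + 1))) 1) 1
  else monomial (Finsupp.mapDomain Option.some a) 1

namespace OneStepAux

variable {n : ℕ}

/-- Exponent vector of the one-step polarization. -/
noncomputable def polExp (a : Fin (n + 1) →₀ ℕ) : Option (Fin (n + 1)) →₀ ℕ :=
  if 2 ≤ a 0 then Finsupp.mapDomain Option.some (a - Finsupp.single 0 1) +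
      Finsupp.single (none : Option (Fin (n + 1))) 1
  else Finsupp.mapDomain Option.some a

lemma oneStepPolarize_eq (K : Type*) [Field K] (a : Fin (n + 1) →₀ ℕ) :
    oneStepPolarize K a = monomial (polExp a) 1 := by
  unfold oneStepPolarize polExp
  split <;> rfl

lemma mapDomain_some_apply (a : Fin (n + 1) →₀ ℕ) (i : Fin (n + 1)) :
    Finsupp.mapDomain Option.some a (some i) = a i :=
  Finsupp.mapDomain_apply (Option.some_injective _) a i

lemma mapDomain_some_none (a : Fin (n + 1) →₀ ℕ) :
    Finsupp.mapDomain Option.some a none = 0 :=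
  Finsupp.mapDomain_notin_range a none (by simp)

lemma polExp_none_le (a : Fin (n + 1) →₀ ℕ) : polExp a none ≤ 1 := by
  unfold polExp
  split <;> simp [Finsupp.add_apply, mapDomain_some_none]

lemma main {K : Type*} [Field K] (B : Set (Option (Fin (n + 1)) →₀ ℕ))
    (H1 : ∀ v ∈ B, v none ≤ 1)
    (H2 : ∀ c : Option (Fin (n + 1)) →₀ ℕ, c none = 0 →
      (∃ v ∈ B, v ≤ Finsupp.single none 1 + c) →
      (∃ v ∈ B, v ≤ Finsupp.single (some 0) 1 + c) →
      ∃ v ∈ B, v ≤ c) :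
    ∀ (N : ℕ) (f : MvPolynomial (Option (Fin (n + 1))) K), f.support.card ≤ N →
      (X none - X (some 0)) * f ∈ Ideal.span ((fun s => monomial s (1 : K)) '' B) →
      f ∈ Ideal.span ((fun s => monomial s (1 : K)) '' B) := by
  intro N
  induction N with
  | zero =>
    intro f hf _
    have : f = 0 := support_eq_empty.1 (Finset.card_eq_zero.1 (Nat.le_zero.1 hf))
    simp [this]
  | succ N ih =>
    intro f hcard hf
    classical
    by_cases hy : ∃ c ∈ f.support, c none ≠ 0
    · -- there is a monomial involving y; pick one with maximal y-degree
      have hne : f.support.Nonempty := hy.imp fun c hc => hc.1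
      obtain ⟨c, hc, hcsup⟩ := Finset.exists_mem_eq_sup f.support hne (fun c => c none)
      have hc1 : 1 ≤ c none := by
        obtain ⟨c', hc', hc'0⟩ := hy
        have : c' none ≤ c none := by
          simpa [hcsup] using Finset.le_sup (f := fun c => c none) hc'
        omega
      have hcf : coeff c f ≠ 0 := mem_support_iff.1 hc
      have hcoeff : coeff (Finsupp.single none 1 + c) ((X none - X (some 0)) * f)
          = coeff c f := by
        rw [sub_mul, coeff_sub, coeff_X_mul', coeff_X_mul']
        have h1 : (none : Option (Fin (n+1))) ∈ (Finsupp.single (none : Option (Fin (n+1))) 1 + c).support := by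
          simp [Finsupp.mem_support_iff]
        rw [if_pos h1, add_tsub_cancel_left]
        have h2 : coeff (Finsupp.single (none : Option (Fin (n+1))) 1 + c
            - Finsupp.single (some 0) 1) f = 0 := by
          by_contra h
          have hmem : ((Finsupp.single (none : Option (Fin (n+1))) 1 + c
              - Finsupp.single (some 0) 1) : Option (Fin (n+1)) →₀ ℕ) none ≤ c none := by
            simpa [hcsup] using Finset.le_sup (f := fun c => c none) (mem_support_iff.2 h)
          simp [Finsupp.tsub_apply, Finsupp.add_apply, Finsupp.single_apply] at hmem
        split <;> simp [h2]
      have hmemprod : Finsupp.single (none : Option (Fin (n+1))) 1 + c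
          ∈ ((X none - X (some 0)) * f).support := by
        rw [mem_support_iff, hcoeff]; exact hcf
      obtain ⟨v, hvB, hvle⟩ := (mem_ideal_span_monomial_image.1 hf) _ hmemprod
      have hvc : v ≤ c := by
        rw [Finsupp.le_def] at hvle ⊢
        intro s
        match s with
        | none => exact le_trans (H1 v hvB) hc1
        | some i =>
          have := hvle (some i)
          simpa [Finsupp.add_apply, Finsupp.single_apply] using this
      have hmono : (monomial c (coeff c f) : MvPolynomial (Option (Fin (n+1))) K)
          ∈ Ideal.span ((fun s => monomial s (1 : K)) '' B) := by
        rw [mem_ideal_span_monomial_image]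
        intro d hd
        rw [support_monomial, if_neg hcf, Finset.mem_singleton] at hd
        exact ⟨v, hvB, hd ▸ hvc⟩
      set g : MvPolynomial (Option (Fin (n+1))) K := f - monomial c (coeff c f) with hg
      have hgsupp : g.support = f.support.erase c := by
        ext d
        rw [Finset.mem_erase, mem_support_iff, mem_support_iff, hg, coeff_sub, coeff_monomial]
        by_cases h : d = c
        · subst h; simp
        · simp [h, Ne.symm h]
      have hgcard : g.support.card ≤ N := by
        rw [hgsupp, Finset.card_erase_of_mem hc]
        omega
      have hgprod : (X none - X (some 0)) * g ∈ Ideal.span ((fun s => monomial s (1 : K)) '' B) := by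
        rw [hg, mul_sub]
        exact Ideal.sub_mem _ hf (Ideal.mul_mem_left _ _ hmono)
      have hgmem := ih g hgcard hgprod
      have : f = g + monomial c (coeff c f) := by rw [hg]; ring
      rw [this]
      exact Ideal.add_mem _ hgmem hmono
    · -- all monomials of f are y-free
      push_neg at hy
      rw [mem_ideal_span_monomial_image] at hf ⊢
      intro c hc
      have h0 : c none = 0 := hy c hc
      have hcf : coeff c f ≠ 0 := mem_support_iff.1 hc
      have hb1 : coeff (Finsupp.single none 1 + c) ((X none - X (some 0)) * f)
          = coeff c f := by
        rw [sub_mul, coeff_sub, coeff_X_mul', coeff_X_mul']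
        have h1 : (none : Option (Fin (n+1))) ∈ (Finsupp.single (none : Option (Fin (n+1))) 1 + c).support := by
          simp [Finsupp.mem_support_iff]
        rw [if_pos h1, add_tsub_cancel_left]
        have h2 : coeff (Finsupp.single (none : Option (Fin (n+1))) 1 + c
            - Finsupp.single (some 0) 1) f = 0 := by
          by_contra h
          have := hy _ (mem_support_iff.2 h)
          rw [Finsupp.tsub_apply] at this
          simp [Finsupp.add_apply, Finsupp.single_apply, h0] at this
        split <;> simp [h2]
      have hb2 : coeff (Finsupp.single (some (0 : Fin (n+1))) 1 + c) ((X none - X (some 0)) * f)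
          = -coeff c f := by
        rw [sub_mul, coeff_sub, coeff_X_mul', coeff_X_mul']
        have h1 : (none : Option (Fin (n+1))) ∉ (Finsupp.single (some (0 : Fin (n+1))) 1 + c).support := by
          simp [Finsupp.mem_support_iff, Finsupp.add_apply, Finsupp.single_apply, h0]
        rw [if_neg h1]
        have h2 : (some (0 : Fin (n+1))) ∈ (Finsupp.single (some (0 : Fin (n+1))) 1 + c).support := by
          simp [Finsupp.mem_support_iff]
        rw [if_pos h2, add_tsub_cancel_left, zero_sub]
      obtain ⟨v, hvB, hvle⟩ := hf _ (mem_support_iff.2 (by rw [hb1]; exact hcf))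
      obtain ⟨w, hwB, hwle⟩ := hf _ (mem_support_iff.2 (by rw [hb2]; exact neg_ne_zero.2 hcf))
      exact H2 c h0 ⟨v, hvB, hvle⟩ ⟨w, hwB, hwle⟩

lemma H2holds (A : Set (Fin (n + 1) →₀ ℕ)) :
    ∀ c : Option (Fin (n + 1)) →₀ ℕ, c none = 0 →
      (∃ v ∈ polExp '' A, v ≤ Finsupp.single none 1 + c) →
      (∃ v ∈ polExp '' A, v ≤ Finsupp.single (some 0) 1 + c) →
      ∃ v ∈ polExp '' A, v ≤ c := by
  rintro c h0 ⟨-, ⟨a, ha, rfl⟩, h1⟩ ⟨-, ⟨b, hb, rfl⟩, h2⟩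
  rw [Finsupp.le_def] at h1 h2
  have hbnone : polExp b none = 0 := by
    have := h2 none
    simpa [Finsupp.add_apply, Finsupp.single_apply, h0] using this
  have hb0 : ¬ (2 ≤ b 0) := by
    intro h
    rw [polExp, if_pos h] at hbnone
    simp [Finsupp.add_apply, Finsupp.single_apply, mapDomain_some_none] at hbnone
  by_cases ha0 : 2 ≤ a 0
  · -- the x_0-degree of c is positive and the depolarized generator b works
    have hc0 : 1 ≤ c (some 0) := by
      have := h1 (some 0)
      rw [polExp, if_pos ha0] at this
      simp only [Finsupp.add_apply] at this
      rw [mapDomain_some_apply, Finsupp.tsub_apply] at this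
      have e1 : (Finsupp.single (none : Option (Fin (n+1))) 1) (some 0) = 0 :=
        Finsupp.single_eq_of_ne (by simp)
      have e2 : (Finsupp.single (0 : Fin (n+1)) 1) 0 = 1 := Finsupp.single_eq_same
      rw [e1, e2] at this
      omega
    refine ⟨polExp b, ⟨b, hb, rfl⟩, ?_⟩
    rw [Finsupp.le_def]
    intro s
    rw [polExp, if_neg hb0]
    match s with
    | none => simp [mapDomain_some_none]
    | some i =>
      rw [mapDomain_some_apply]
      by_cases hi : i = 0
      · subst hi
        omega
      · have h0i : ¬ (0 : Fin (n+1)) = i := fun h => hi h.symm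
        have := h2 (some i)
        rw [polExp, if_neg hb0, mapDomain_some_apply] at this
        simpa [Finsupp.add_apply, Finsupp.single_apply, h0i] using this
  · refine ⟨polExp a, ⟨a, ha, rfl⟩, ?_⟩
    rw [Finsupp.le_def]
    intro s
    rw [polExp, if_neg ha0]
    match s with
    | none => simp [mapDomain_some_none]
    | some i =>
      rw [mapDomain_some_apply]
      have := h1 (some i)
      rw [polExp, if_neg ha0, mapDomain_some_apply] at this
      simpa [Finsupp.add_apply, Finsupp.single_apply] using this

variable {K : Type*} [Field K]

/-- The substitution `y ↦ x₀`. -/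
noncomputable def phi (K : Type*) [Field K] (n : ℕ) :
    MvPolynomial (Option (Fin (n + 1))) K →ₐ[K] MvPolynomial (Fin (n + 1)) K :=
  aeval (fun o => o.elim (X 0) X)

lemma phi_rename (p : MvPolynomial (Fin (n + 1)) K) : phi K n (rename some p) = p := by
  rw [phi, aeval_rename]
  exact aeval_X_left_apply p

lemma phi_X_none : phi K n (X none) = X 0 := by simp [phi]

lemma phi_X_some (i : Fin (n + 1)) : phi K n (X (some i)) = X i := by simp [phi]

lemma phi_monomial_mapDomain (a : Fin (n + 1) →₀ ℕ) (r : K) :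
    phi K n (monomial (Finsupp.mapDomain some a) r) = monomial a r := by
  rw [← rename_monomial]; exact phi_rename _

lemma phi_pol (a : Fin (n + 1) →₀ ℕ) :
    phi K n (oneStepPolarize K a) = monomial a 1 := by
  rw [oneStepPolarize]
  split
  · next h =>
    rw [monomial_add_single, pow_one, map_mul, phi_monomial_mapDomain, phi_X_none,
      ← pow_one (X (0 : Fin (n+1))), ← monomial_add_single,
      tsub_add_cancel_of_le (Finsupp.single_le_iff.2 (by omega))]
  · exact phi_monomial_mapDomain a 1

lemma sub_rename_phi_mem (p : MvPolynomial (Option (Fin (n + 1))) K) :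
    p - rename some (phi K n p) ∈ Ideal.span {(X none - X (some 0) :
      MvPolynomial (Option (Fin (n + 1))) K)} := by
  induction p using MvPolynomial.induction_on with
  | C r => simp [phi]
  | add p q hp hq =>
    have : p + q - rename some (phi K n (p + q))
        = (p - rename some (phi K n p)) + (q - rename some (phi K n q)) := by
      rw [map_add, map_add]; ring
    rw [this]
    exact Ideal.add_mem _ hp hq
  | mul_X p i hp =>
    have key : p * X i - rename some (phi K n (p * X i))
        = (p - rename some (phi K n p)) * X i
          + rename some (phi K n p) * (X i - rename some (phi K n (X i))) := by
      rw [map_mul, map_mul]; ring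
    rw [key]
    refine Ideal.add_mem _ (Ideal.mul_mem_right _ _ hp) ?_
    match i with
    | some j =>
      rw [phi_X_some, rename_X, sub_self, mul_zero]
      exact Ideal.zero_mem _
    | none =>
      rw [phi_X_none, rename_X]
      exact Ideal.mul_mem_left _ _ (Ideal.subset_span rfl)

end OneStepAux

set_option synthInstance.maxHeartbeats 1000000 in
set_option maxHeartbeats 1000000 in
/-- Let `I ⊆ S = K[x_0,…,x_n]` be the monomial ideal minimally generated by the monomials
`x^a`, `a ∈ A`, with `deg_{x_0} x^a ≥ 2` for some generator, and let `I' ⊆ S[y]` be the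
1-step polarization of `I` with respect to `x_0`. Then `y - x_0` is a non zero-divisor on
`S[y]/I'`, and `(S[y]/I')/(y - x_0)(S[y]/I') ≅ S/I`. -/
theorem oneStepPolarization_regular {n : ℕ} (K : Type*) [Field K]
    (A : Set (Fin (n + 1) →₀ ℕ)) (hmin : ∀ a ∈ A, ∀ b ∈ A, a ≤ b → a = b)
    (hdeg : ∃ a ∈ A, 2 ≤ a 0)
    (I : Ideal (MvPolynomial (Fin (n + 1)) K))
    (hI : I = Ideal.span ((fun a => (monomial a (1 : K) : MvPolynomial (Fin (n + 1)) K)) '' A))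
    (I' : Ideal (MvPolynomial (Option (Fin (n + 1))) K))
    (hI' : I' = Ideal.span (oneStepPolarize K '' A)) :
    IsSMulRegular (MvPolynomial (Option (Fin (n + 1))) K ⧸ I')
      (Ideal.Quotient.mk I' (X none - X (some 0))) ∧
    Nonempty
      (((MvPolynomial (Option (Fin (n + 1))) K ⧸ I') ⧸
          Ideal.span {Ideal.Quotient.mk I' (X none - X (some 0))}) ≃+*
        (MvPolynomial (Fin (n + 1)) K ⧸ I)) := by
  classical
  have himage : oneStepPolarize K '' A
      = (fun s => monomial s (1 : K)) '' (OneStepAux.polExp '' A) := by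
    rw [Set.image_image]
    exact Set.image_congr' fun a => OneStepAux.oneStepPolarize_eq K a
  have key : ∀ f : MvPolynomial (Option (Fin (n + 1))) K,
      (X none - X (some 0)) * f ∈ I' → f ∈ I' := by
    intro f hf
    rw [hI', himage] at hf ⊢
    exact OneStepAux.main _ (by rintro v ⟨a, -, rfl⟩; exact OneStepAux.polExp_none_le a)
      (OneStepAux.H2holds A) f.support.card f le_rfl hf
  constructor
  · -- regularity
    intro u v huv
    obtain ⟨p, rfl⟩ := Ideal.Quotient.mk_surjective u
    obtain ⟨q, rfl⟩ := Ideal.Quotient.mk_surjective v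
    have h1 : Ideal.Quotient.mk I' ((X none - X (some 0)) * p)
        = Ideal.Quotient.mk I' ((X none - X (some 0)) * q) := by
      simpa [smul_eq_mul, map_mul] using huv
    rw [Ideal.Quotient.eq] at h1 ⊢
    have h2 : (X none - X (some 0)) * (p - q) ∈ I' := by
      rw [mul_sub]; exact h1
    exact key _ h2
  · -- isomorphism
    set ξ : MvPolynomial (Option (Fin (n + 1))) K := X none - X (some 0) with hξ
    set ψ : MvPolynomial (Option (Fin (n + 1))) K →+* MvPolynomial (Fin (n + 1)) K ⧸ I :=
      (Ideal.Quotient.mk I).comp (OneStepAux.phi K n).toRingHom with hψ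
    have hψ_apply : ∀ p, ψ p = Ideal.Quotient.mk I (OneStepAux.phi K n p) := fun p => rfl
    have hsurj : Function.Surjective ψ := by
      intro q
      obtain ⟨p, rfl⟩ := Ideal.Quotient.mk_surjective q
      exact ⟨rename some p, by rw [hψ_apply, OneStepAux.phi_rename]⟩
    have hker : RingHom.ker ψ = I' ⊔ Ideal.span {ξ} := by
      apply le_antisymm
      · intro p hp
        rw [RingHom.mem_ker, hψ_apply, Ideal.Quotient.eq_zero_iff_mem] at hp
        have h1 : p - rename some (OneStepAux.phi K n p) ∈ Ideal.span {ξ} :=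
          OneStepAux.sub_rename_phi_mem p
        have hmaple : Ideal.map (rename (Option.some) :
            MvPolynomial (Fin (n + 1)) K →ₐ[K] MvPolynomial (Option (Fin (n + 1))) K) I
            ≤ I' ⊔ Ideal.span {ξ} := by
          rw [hI, Ideal.map_span, Ideal.span_le]
          rintro g ⟨-, ⟨a, ha, rfl⟩, rfl⟩
          rw [SetLike.mem_coe, rename_monomial]
          by_cases h2a : 2 ≤ a 0
          · have hsplit : (monomial (Finsupp.mapDomain some a) 1 :
                MvPolynomial (Option (Fin (n + 1))) K)
                = oneStepPolarize K a
                  + monomial (Finsupp.mapDomain some (a - Finsupp.single 0 1)) 1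
                    * (X (some 0) - X none) := by
              have ha' : a = (a - Finsupp.single 0 1) + Finsupp.single 0 1 :=
                (tsub_add_cancel_of_le (Finsupp.single_le_iff.2 (by omega))).symm
              conv_lhs => rw [ha']
              rw [Finsupp.mapDomain_add, Finsupp.mapDomain_single, oneStepPolarize, if_pos h2a,
                monomial_add_single, pow_one, monomial_add_single, pow_one]
              ring
            rw [hsplit]
            refine Ideal.add_mem _
              (Ideal.mem_sup_left (hI' ▸ Ideal.subset_span ⟨a, ha, rfl⟩)) ?_
            refine Ideal.mem_sup_right (Ideal.mul_mem_left _ _ ?_)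
            rw [show (X (some 0) - X none : MvPolynomial (Option (Fin (n + 1))) K) = -ξ by
              rw [hξ]; ring]
            exact neg_mem (Ideal.subset_span rfl)
          · have : (monomial (Finsupp.mapDomain some a) 1 :
                MvPolynomial (Option (Fin (n + 1))) K) = oneStepPolarize K a := by
              rw [oneStepPolarize, if_neg h2a]
            rw [this]
            exact Ideal.mem_sup_left (hI' ▸ Ideal.subset_span ⟨a, ha, rfl⟩)
        have h2 : rename some (OneStepAux.phi K n p) ∈ I' ⊔ Ideal.span {ξ} :=
          hmaple (Ideal.mem_map_of_mem _ hp)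
        have hpe : p = (p - rename some (OneStepAux.phi K n p))
            + rename some (OneStepAux.phi K n p) := by ring
        rw [hpe]
        exact Ideal.add_mem _ (Ideal.mem_sup_right h1) h2
      · rw [sup_le_iff]
        constructor
        · rw [hI', Ideal.span_le]
          rintro g ⟨a, ha, rfl⟩
          rw [SetLike.mem_coe, RingHom.mem_ker, hψ_apply, OneStepAux.phi_pol,
            Ideal.Quotient.eq_zero_iff_mem, hI]
          exact Ideal.subset_span ⟨a, ha, rfl⟩
        · rw [Ideal.span_le, Set.singleton_subset_iff, SetLike.mem_coe, RingHom.mem_ker,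
            hψ_apply, hξ, map_sub, OneStepAux.phi_X_none, OneStepAux.phi_X_some, sub_self,
            map_zero]
    have hspan : Ideal.span {Ideal.Quotient.mk I' ξ}
        = Ideal.map (Ideal.Quotient.mk I') (Ideal.span {ξ}) := by
      rw [Ideal.map_span, Set.image_singleton]
    exact ⟨((Ideal.quotEquivOfEq hspan).trans
      (DoubleQuot.quotQuotEquivQuotSup I' (Ideal.span {ξ}))).trans
      ((Ideal.quotEquivOfEq hker.symm).trans (RingHom.quotientKerEquivOfSurjective hsurj))⟩
end
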